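/- For every fixed integer t, the property 'the connected graph G has treedepth at most t' admits a local certification scheme with certificates of size O(t log n) bits. -/

import Mathlib

/-! ### First-order logic on graphs -/

/-- First-order formulas in the language of graphs (equality and one binary
adjacency relation), with free variables among `Fin n`. -/
inductive GraphFormula : ℕ → Type where
  | eq : ∀ {n : ℕ}, Fin n → Fin n → GraphFormula n
  | adj : ∀ {n : ℕ}, Fin n → Fin n → GraphFormula n
  | not : ∀ {n : ℕ}, GraphFormula n → GraphFormula n
  | and : ∀ {n : ℕ}, GraphFormula n → GraphFormula n → GraphFormula n
  | or : ∀ {n : ℕ}, GraphFormula n → GraphFormula n → GraphFormula n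
  | all : ∀ {n : ℕ}, GraphFormula (n + 1) → GraphFormula n
  | ex : ∀ {n : ℕ}, GraphFormula (n + 1) → GraphFormula n

namespace GraphFormula

/-- Quantifier depth of a formula: the maximum number of nested quantifiers. -/
def qdepth : ∀ {n : ℕ}, GraphFormula n → ℕ
  | _, .eq _ _ => 0
  | _, .adj _ _ => 0
  | _, .not f => qdepth f
  | _, .and f g => max (qdepth f) (qdepth g)
  | _, .or f g => max (qdepth f) (qdepth g)
  | _, .all f => qdepth f + 1
  | _, .ex f => qdepth f + 1

/-- Satisfaction of a formula in a simple graph, under an assignment of the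
free variables. -/
def Sat {V : Type*} (G : SimpleGraph V) : ∀ {n : ℕ}, GraphFormula n → (Fin n → V) → Prop
  | _, .eq i j, a => a i = a j
  | _, .adj i j, a => G.Adj (a i) (a j)
  | _, .not f, a => ¬ Sat G f a
  | _, .and f g, a => Sat G f a ∧ Sat G g a
  | _, .or f g, a => Sat G f a ∨ Sat G g a
  | _, .all f, a => ∀ v, Sat G f (Fin.snoc a v)
  | _, .ex f, a => ∃ v, Sat G f (Fin.snoc a v)

/-- Existential closure: prefix a formula with one existential quantifier for
each of its free variables. -/
def exClosure : ∀ {n : ℕ}, GraphFormula n → GraphFormula 0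
  | 0, f => f
  | _ + 1, f => exClosure (GraphFormula.ex f)

end GraphFormula

/-- A graph satisfies a sentence (formula with no free variables). -/
def SatSentence {V : Type*} (G : SimpleGraph V) (φ : GraphFormula 0) : Prop :=
  GraphFormula.Sat G φ Fin.elim0

/-! ### Local certification -/

/-- A valid identifier assignment: pairwise distinct identifiers in `[1, n ^ c]`. -/
def ValidIds (c : ℕ) {n : ℕ} (ids : Fin n → ℕ) : Prop :=
  Function.Injective ids ∧ ∀ v, 1 ≤ ids v ∧ ids v ≤ n ^ c

/-- The part of the local view of a vertex `v` consisting of the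
(identifier, certificate) pairs of its neighbors. -/
def neighborsView {n : ℕ} (G : SimpleGraph (Fin n)) (ids : Fin n → ℕ)
    (cert : Fin n → List Bool) (v : Fin n) : Set (ℕ × List Bool) :=
  {p | ∃ u, G.Adj v u ∧ p = (ids u, cert u)}

/-- The part of the local view of a vertex `v`, in the presence of inputs
(labels), consisting of the (identifier, label, certificate) triples of its
neighbors. -/
def labeledNeighborsView {n : ℕ} {L : Type*} (G : SimpleGraph (Fin n)) (ids : Fin n → ℕ)
    (lab : Fin n → L) (cert : Fin n → List Bool) (v : Fin n) :
    Set (ℕ × L × List Bool) :=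
  {p | ∃ u, G.Adj v u ∧ p = (ids u, lab u, cert u)}

/-! ### Rooted trees, elimination trees and treedepth -/

/-- A rooted tree on the vertex set `V`, given by its root and parent
function: every vertex reaches the root by iterating the parent map. -/
structure ElimTree (V : Type*) where
  root : V
  parent : V → V
  parent_root : parent root = root
  reaches_root : ∀ v, ∃ j : ℕ, parent^[j] v = root

namespace ElimTree

variable {V : Type*}

/-- The depth of a vertex in a rooted tree (the root has depth 0). -/
noncomputable def depth (T : ElimTree V) (v : V) : ℕ :=
  sInf {j : ℕ | T.parent^[j] v = T.root}

/-- `u` is an ancestor of `v` (possibly `u = v`). -/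
def IsAncestor (T : ElimTree V) (u v : V) : Prop :=
  ∃ j : ℕ, T.parent^[j] v = u

/-- The set of vertices of `S` in the subtree rooted at `v`. -/
def subtree (T : ElimTree V) (S : Set V) (v : V) : Set V :=
  {x ∈ S | T.IsAncestor v x}

end ElimTree

/-- `T` is a `t`-model (elimination tree of depth at most `t`) of `G`:
every vertex has depth at most `t` and every edge of `G` joins a vertex to
one of its ancestors. -/
def IsModelOfDepth {V : Type*} (T : ElimTree V) (G : SimpleGraph V) (t : ℕ) : Prop :=
  (∀ v, T.depth v ≤ t) ∧ ∀ u v, G.Adj u v → T.IsAncestor u v ∨ T.IsAncestor v u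

/-- The graph `G` has treedepth at most `t`. -/
def TreedepthLE {V : Type*} (G : SimpleGraph V) (t : ℕ) : Prop :=
  ∃ T : ElimTree V, IsModelOfDepth T G t

/-- A model `T` of `G` is coherent if for every non-root vertex `w` (i.e.
every child `w` of a vertex of `T`), some vertex of the subtree rooted at `w`
is adjacent in `G` to the parent of `w`. -/
def Coherent {V : Type*} (T : ElimTree V) (G : SimpleGraph V) : Prop :=
  ∀ w, w ≠ T.root → ∃ x, T.IsAncestor w x ∧ G.Adj x (T.parent w)

/-! ### Types, prunings and k-reduced graphs -/

/-- The type of `v` in the induced structure on `S₁` equals the type of `w`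
in the induced structure on `S₂`: there is a bijection between the subtrees
rooted at `v` and `w` preserving the tree structure, the depths, and the
ancestor vectors (adjacency in `G` to the ancestors). -/
def SameTypeIn {V : Type*} (G : SimpleGraph V) (T : ElimTree V)
    (S₁ S₂ : Set V) (v w : V) : Prop :=
  ∃ f : V → V,
    Set.BijOn f (T.subtree S₁ v) (T.subtree S₂ w) ∧
    f v = w ∧
    (∀ x ∈ T.subtree S₁ v, x ≠ v → f (T.parent x) = T.parent (f x)) ∧
    (∀ x ∈ T.subtree S₁ v, T.depth (f x) = T.depth x ∧
      ∀ m : ℕ, G.Adj x (T.parent^[m] x) ↔ G.Adj (f x) (T.parent^[m] (f x)))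

/-- Two vertices of `S` have the same type. -/
def SameType {V : Type*} (G : SimpleGraph V) (T : ElimTree V) (S : Set V) (v w : V) : Prop :=
  SameTypeIn G T S S v w

/-- A valid pruning operation on the current vertex set `S`: `u` is a vertex
whose parent has more than `k` children (in `S`) of the same type as `u`, and
the whole subtree rooted at `u` is removed, yielding `S'`. -/
def PruneStep {V : Type*} (G : SimpleGraph V) (T : ElimTree V) (k : ℕ)
    (S : Set V) (u : V) (S' : Set V) : Prop :=
  u ∈ S ∧ u ≠ T.root ∧
  (∃ C : Set V, C ⊆ S ∧ u ∈ C ∧ C.Finite ∧ k + 1 ≤ C.ncard ∧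
    (∀ w ∈ C, T.parent w = T.parent u ∧ w ≠ T.parent u) ∧
    (∀ w ∈ C, SameType G T S u w)) ∧
  S' = S \ {x | T.IsAncestor u x}

/-- A valid pruning operation performed at a vertex of the largest possible
depth among all currently possible pruning operations. -/
def MaxPruneStep {V : Type*} (G : SimpleGraph V) (T : ElimTree V) (k : ℕ)
    (S : Set V) (u : V) (S' : Set V) : Prop :=
  PruneStep G T k S u S' ∧
    ∀ u' S'', PruneStep G T k S u' S'' → T.depth u' ≤ T.depth u

/-- A complete pruning process producing a `k`-reduced graph of `G` from the
model `T`: starting from all of `G`, valid pruning operations are applied,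
always at a vertex of largest possible depth, until none applies. -/
structure PruningProcess {V : Type*} (G : SimpleGraph V) (T : ElimTree V) (k : ℕ) where
  len : ℕ
  sets : ℕ → Set V
  prunedAt : ℕ → V
  init : sets 0 = Set.univ
  step : ∀ i < len, MaxPruneStep G T k (sets i) (prunedAt i) (sets (i + 1))
  halt : ∀ u S', ¬ PruneStep G T k (sets len) u S'

namespace PruningProcess

variable {V : Type*} {G : SimpleGraph V} {T : ElimTree V} {k : ℕ}

/-- The vertex set of the resulting `k`-reduced graph. -/
def result (P : PruningProcess G T k) : Set V := P.sets P.len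

/-- The index of the step at which a vertex was deleted (the current set at
that moment still contains the vertex); for surviving vertices this is the
final index. -/
noncomputable def lastIdx (P : PruningProcess G T k) (v : V) : ℕ :=
  sInf {i : ℕ | i = P.len ∨ v ∉ P.sets (i + 1)}

/-- The vertex set that was current when `v` was deleted (for a deleted
vertex), or the final vertex set (for a surviving vertex). -/
noncomputable def currentSet (P : PruningProcess G T k) (v : V) : Set V :=
  P.sets (P.lastIdx v)

/-- `v` and `w` have the same end type: the end type of a deleted vertex is
its type in the graph current when it was deleted, and the end type of a
surviving vertex is its type in the resulting graph. -/
def EndTypeEq (P : PruningProcess G T k) (v w : V) : Prop :=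
  SameTypeIn G T (P.currentSet v) (P.currentSet w) v w

end PruningProcess


/-! ### Auxiliary development for the certification scheme -/

namespace TDCert

/-- Self-delimiting binary encoding of a natural number. -/
def encN (m : ℕ) : List Bool :=
  (Nat.digits 2 m).flatMap (fun d => [true, d == 1]) ++ [false]

/-- Encoding of a list of naturals. -/
def encL (l : List ℕ) : List Bool := l.flatMap encN

lemma tag_inj : ∀ (ds es : List ℕ) (x y : List Bool),
    (∀ d ∈ ds, d < 2) → (∀ e ∈ es, e < 2) →
    ds.flatMap (fun d => [true, d == 1]) ++ false :: x
      = es.flatMap (fun d => [true, d == 1]) ++ false :: y →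
    ds = es ∧ x = y := by
  intro ds
  induction ds with
  | nil =>
    intro es x y _ he h
    cases es with
    | nil => simpa using h
    | cons e es => simp at h
  | cons d ds ih =>
    intro es x y hd he h
    cases es with
    | nil => simp at h
    | cons e es =>
      simp only [List.flatMap_cons, List.cons_append, List.append_assoc,
        List.cons.injEq, List.nil_append] at h
      obtain ⟨-, hb, h⟩ := h
      have hd' : d < 2 := hd d (by simp)
      have he' : e < 2 := he e (by simp)
      have hde : d = e := by
        interval_cases d <;> interval_cases e <;> simp_all
      obtain ⟨h1, h2⟩ := ih es x y (fun a ha => hd a (by simp [ha]))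
        (fun a ha => he a (by simp [ha])) h
      exact ⟨by rw [hde, h1], h2⟩

lemma encN_append_inj {a b : ℕ} {x y : List Bool}
    (h : encN a ++ x = encN b ++ y) : a = b ∧ x = y := by
  unfold encN at h
  rw [List.append_assoc, List.append_assoc, List.singleton_append,
    List.singleton_append] at h
  obtain ⟨h1, h2⟩ := tag_inj _ _ _ _
    (fun d hd => Nat.digits_lt_base (by norm_num) hd)
    (fun d hd => Nat.digits_lt_base (by norm_num) hd) h
  refine ⟨?_, h2⟩
  have := congrArg (Nat.ofDigits 2) h1
  rwa [Nat.ofDigits_digits, Nat.ofDigits_digits] at this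

lemma encN_ne_nil (m : ℕ) : encN m ≠ [] := by
  simp [encN]

lemma encL_inj : Function.Injective encL := by
  intro l₁
  induction l₁ with
  | nil =>
    intro l₂ h
    cases l₂ with
    | nil => rfl
    | cons b l₂ =>
      exfalso
      have := congrArg List.length h
      simp [encL, encN] at this
  | cons a l ih =>
    intro l₂ h
    cases l₂ with
    | nil =>
      exfalso
      have := congrArg List.length h
      simp [encL, encN] at this
    | cons b l₂ =>
      simp only [encL, List.flatMap_cons] at h
      obtain ⟨h1, h2⟩ := encN_append_inj h
      rw [h1, ih h2]

lemma length_encN_le {m B : ℕ} (h : m < 2 ^ B) : (encN m).length ≤ 2 * B + 1 := by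
  have hlen : (Nat.digits 2 m).length ≤ B := by
    rcases Nat.eq_zero_or_pos m with rfl | hm
    · simp
    · rw [Nat.digits_len 2 m (by norm_num) hm.ne']
      have := (Nat.log_lt_iff_lt_pow (by norm_num : 1 < 2) hm.ne').mpr h
      omega
  have : ((Nat.digits 2 m).flatMap (fun d => [true, d == 1])).length
      = 2 * (Nat.digits 2 m).length := by
    induction Nat.digits 2 m with
    | nil => simp
    | cons d ds ih => simp [ih]; omega
  simp only [encN, List.length_append, List.length_cons, List.length_nil, this]
  omega

lemma length_encL_le {l : List ℕ} {K : ℕ} (h : ∀ m ∈ l, (encN m).length ≤ K) :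
    (encL l).length ≤ l.length * K := by
  induction l with
  | nil => simp [encL]
  | cons a l ih =>
    simp only [encL, List.flatMap_cons, List.length_append, List.length_cons]
    have h1 := h a (by simp)
    have h2 := ih (fun m hm => h m (by simp [hm]))
    simp only [encL] at h2
    calc (encN a).length + (l.flatMap encN).length ≤ K + l.length * K := by omega
    _ = (l.length + 1) * K := by ring


noncomputable def tdVerify (t : ℕ) : ℕ → List Bool → Set (ℕ × List Bool) → Bool :=
  fun id cert view =>
    @decide (∃ M : List ℕ, cert = encL M ∧ M.length ≤ t ∧
      ∀ p ∈ view, ∃ M' : List ℕ, p.2 = encL M' ∧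
        ((id :: M) <:+ (p.1 :: M') ∨ (p.1 :: M') <:+ (id :: M)))
      (Classical.propDecidable _)

lemma tdVerify_iff (t : ℕ) (id : ℕ) (cert : List Bool) (view : Set (ℕ × List Bool)) :
    tdVerify t id cert view = true ↔
      (∃ M : List ℕ, cert = encL M ∧ M.length ≤ t ∧
        ∀ p ∈ view, ∃ M' : List ℕ, p.2 = encL M' ∧
          ((id :: M) <:+ (p.1 :: M') ∨ (p.1 :: M') <:+ (id :: M))) := by
  unfold tdVerify
  exact @decide_eq_true_iff _ (Classical.propDecidable _)

lemma tree_of_lists {n : ℕ} (G : SimpleGraph (Fin n)) (hG : G.Connected) (t : ℕ)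
    (L : Fin n → List ℕ)
    (hinj : Function.Injective L)
    (hne : ∀ v, L v ≠ [])
    (hlen : ∀ v, (L v).length ≤ t + 1)
    (hedge : ∀ u v, G.Adj u v → L u <:+ L v ∨ L v <:+ L u) :
    TreedepthLE G t := by
  classical
  haveI : Nonempty (Fin n) := hG.nonempty
  -- choose a vertex with list of minimum length
  obtain ⟨r, -, hr⟩ := Finset.exists_min_image Finset.univ
    (fun v => (L v).length) ⟨Classical.arbitrary _, Finset.mem_univ _⟩
  have hr : ∀ v : Fin n, (L r).length ≤ (L v).length := fun v => hr v (Finset.mem_univ v)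
  -- the root's list is a suffix of everyone's
  have key : ∀ (a b : Fin n) (w : G.Walk a b), L r <:+ L a → L r <:+ L b := by
    intro a b w
    induction w with
    | nil => exact id
    | cons hadj p ih =>
      intro ha
      apply ih
      rcases hedge _ _ hadj with h | h
      · exact ha.trans h
      · exact List.suffix_of_suffix_length_le ha h (hr _)
  have hroot : ∀ v, L r <:+ L v := by
    intro v
    obtain ⟨w⟩ := hG.preconnected r v
    exact key r v w (List.suffix_refl _)
  -- parent choice
  have hP : ∀ v : Fin n, ∃ w : Fin n,
      (v = r → w = r) ∧
      (v ≠ r → (L w <:+ L v ∧ w ≠ v) ∧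
        ∀ w' : Fin n, L w' <:+ L v → w' ≠ v → (L w').length ≤ (L w).length) := by
    intro v
    by_cases h : v = r
    · exact ⟨r, fun _ => rfl, fun h' => absurd h h'⟩
    · obtain ⟨w, hw, hmax⟩ := Finset.exists_max_image
        (Finset.univ.filter fun w => L w <:+ L v ∧ w ≠ v) (fun w => (L w).length)
        ⟨r, by simp only [Finset.mem_filter, Finset.mem_univ, true_and]
               exact ⟨hroot v, fun e => h e.symm⟩⟩
      simp only [Finset.mem_filter, Finset.mem_univ, true_and] at hw
      refine ⟨w, fun h' => absurd h' h, fun _ => ⟨hw, fun w' h1 h2 => ?_⟩⟩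
      exact hmax w' (by simp only [Finset.mem_filter, Finset.mem_univ, true_and]
                        exact ⟨h1, h2⟩)
  set par : Fin n → Fin n := fun v => (hP v).choose with hpar
  have par_r : par r = r := (hP r).choose_spec.1 rfl
  have par_spec : ∀ v : Fin n, v ≠ r → (L (par v) <:+ L v ∧ par v ≠ v) ∧
      ∀ w' : Fin n, L w' <:+ L v → w' ≠ v → (L w').length ≤ (L (par v)).length :=
    fun v hv => (hP v).choose_spec.2 hv
  have plen : ∀ v : Fin n, v ≠ r → (L (par v)).length < (L v).length := by
    intro v hv
    obtain ⟨⟨hs, hne'⟩, -⟩ := par_spec v hv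
    have hlt := hs.length_le
    rcases lt_or_eq_of_le hlt with h | h
    · exact h
    · exact absurd (hinj (hs.eq_of_length h)) hne'
  -- reaching the root with few steps
  have reach : ∀ m, ∀ v : Fin n, (L v).length ≤ m →
      ∃ j, j + (L r).length ≤ (L v).length ∧ par^[j] v = r := by
    intro m
    induction m with
    | zero =>
      intro v hv
      exact absurd (List.length_pos_iff.mpr (hne v)) (by omega)
    | succ m ih =>
      intro v hv
      by_cases h : v = r
      · exact ⟨0, by simp [h], by simp [h]⟩
      · have hlt := plen v h
        obtain ⟨j, hj, hjr⟩ := ih (par v) (by omega)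
        exact ⟨j + 1, by omega, by rw [Function.iterate_succ_apply]; exact hjr⟩
  -- ancestor completeness along suffixes
  have anc : ∀ m, ∀ v w : Fin n, (L v).length ≤ m → L w <:+ L v →
      ∃ j, par^[j] v = w := by
    intro m
    induction m with
    | zero =>
      intro v w hv _
      exact absurd (List.length_pos_iff.mpr (hne v)) (by omega)
    | succ m ih =>
      intro v w hv hs
      by_cases hw : w = v
      · exact ⟨0, hw.symm⟩
      · have hpr : (L w).length < (L v).length := by
          rcases lt_or_eq_of_le hs.length_le with h | h
          · exact h
          · exact absurd (hinj (hs.eq_of_length h)) hw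
        have hvr : v ≠ r := by
          intro h
          subst h
          exact absurd (hr w) (by omega)
        obtain ⟨⟨hs', -⟩, hmax⟩ := par_spec v hvr
        have hle : (L w).length ≤ (L (par v)).length := hmax w hs hw
        have hws : L w <:+ L (par v) := List.suffix_of_suffix_length_le hs hs' hle
        have hplt := plen v hvr
        obtain ⟨j, hj⟩ := ih (par v) w (by omega) hws
        exact ⟨j + 1, by rw [Function.iterate_succ_apply]; exact hj⟩
  -- construct the tree
  refine ⟨⟨r, par, par_r, fun v => ?_⟩, fun v => ?_, fun u v hadj => ?_⟩
  · obtain ⟨j, -, hj⟩ := reach (L v).length v le_rfl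
    exact ⟨j, hj⟩
  · obtain ⟨j, hjle, hj⟩ := reach (L v).length v le_rfl
    have h1 : 1 ≤ (L r).length := List.length_pos_iff.mpr (hne r)
    have h2 := hlen v
    have : j ≤ t := by omega
    exact le_trans (Nat.sInf_le hj) this
  · rcases hedge u v hadj with h | h
    · exact Or.inl (anc (L v).length v u le_rfl h)
    · exact Or.inr (anc (L u).length u v le_rfl h)


lemma lists_of_tree {n : ℕ} (G : SimpleGraph (Fin n)) (T : ElimTree (Fin n)) (t : ℕ)
    (hT : IsModelOfDepth T G t) (ids : Fin n → ℕ) :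
    ∃ M : Fin n → List ℕ,
      (∀ v, (M v).length ≤ t) ∧
      (∀ v, ∀ m ∈ M v, ∃ u, m = ids u) ∧
      (∀ u v, G.Adj u v →
        (ids u :: M u) <:+ (ids v :: M v) ∨ (ids v :: M v) <:+ (ids u :: M u)) := by
  classical
  set p := T.parent with hp
  -- the full ancestor-list function
  set Lf : Fin n → List ℕ :=
    fun v => (List.range (T.depth v + 1)).map (fun j => ids (p^[j] v)) with hLf
  have hdepth_mem : ∀ v : Fin n, p^[T.depth v] v = T.root := fun v =>
    Nat.sInf_mem (T.reaches_root v)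
  have hroot_fix : ∀ k : ℕ, p^[k] T.root = T.root :=
    Function.iterate_fixed T.parent_root
  -- ancestors give suffixes
  have hanc : ∀ u v : Fin n, T.IsAncestor u v → Lf u <:+ Lf v := by
    intro u v ⟨j, hj⟩
    set d := T.depth v with hd
    -- replace j by min j d
    have hj' : p^[min j d] v = u := by
      rcases le_or_gt j d with h | h
      · rwa [min_eq_left h]
      · rw [min_eq_right h.le]
        have : p^[j] v = p^[j - d] (p^[d] v) := by
          rw [← Function.iterate_add_apply]
          congr 1
          omega
        rw [this, hdepth_mem v, hroot_fix] at hj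
        rw [hdepth_mem v, ← hj]
    set j' := min j d with hj'def
    have hj'le : j' ≤ d := min_le_right _ _
    -- depth u = d - j'
    have hdu : T.depth u = d - j' := by
      apply le_antisymm
      · apply Nat.sInf_le
        show p^[d - j'] u = T.root
        rw [← hj', ← Function.iterate_add_apply]
        have : d - j' + j' = d := by omega
        rw [this]
        exact hdepth_mem v
      · have he := hdepth_mem u
        have : p^[T.depth u + j'] v = T.root := by
          rw [Function.iterate_add_apply, hj', he]
        have hd_le : d ≤ T.depth u + j' := Nat.sInf_le this
        omega
    -- now assemble the suffix
    refine ⟨(List.range j').map (fun j => ids (p^[j] v)), ?_⟩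
    have hsplit : (j' : ℕ) + (d - j' + 1) = d + 1 := by omega
    have hgen : ∀ (f : ℕ → ℕ) (a b : ℕ), (List.range (a + b)).map f
        = (List.range a).map f ++ (List.range b).map (fun i => f (a + i)) := by
      intro f a b
      rw [List.range_add, List.map_append, List.map_map]
      rfl
    rw [hLf]
    simp only
    rw [hdu, ← hsplit]
    conv_rhs => rw [hgen (fun j => ids (p^[j] v)) j' (d - j' + 1)]
    congr 1
    apply List.map_congr_left
    intro i _
    show ids (p^[i] u) = ids (p^[j' + i] v)
    rw [← hj', ← Function.iterate_add_apply, Nat.add_comm i j']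
  -- head of Lf
  have hhead : ∀ v : Fin n, Lf v = ids v :: (Lf v).tail := by
    intro v
    rw [hLf]
    simp only
    rw [List.range_succ_eq_map, List.map_cons]
    simp
  refine ⟨fun v => (Lf v).tail, ?_, ?_, ?_⟩
  · intro v
    show ((Lf v).tail).length ≤ t
    have : (Lf v).length = T.depth v + 1 := by simp [hLf]
    have h2 := congrArg List.length (hhead v)
    simp only [List.length_cons] at h2
    have := hT.1 v
    omega
  · intro v m hm
    have : m ∈ Lf v := by rw [hhead v]; exact List.mem_cons_of_mem _ hm
    rw [hLf] at this
    simp only [List.mem_map, List.mem_range] at this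
    obtain ⟨j, -, hj⟩ := this
    exact ⟨p^[j] v, hj.symm⟩
  · intro u v hadj
    rcases hT.2 u v hadj with h | h
    · left; rw [← hhead u, ← hhead v]; exact hanc u v h
    · right; rw [← hhead u, ← hhead v]; exact hanc v u h


end TDCert

/-- For every fixed integer `t` (and fixed constant `c ≥ 1` for the
identifier range), the property "the connected graph `G` has treedepth at most `t`"
admits a local certification scheme with certificates of size `O(t log n)` bits. -/
theorem treedepth_local_certification (t c : ℕ) (hc : 1 ≤ c) :
    ∃ (C : ℕ) (verify : ℕ → List Bool → Set (ℕ × List Bool) → Bool),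
      ∀ (n : ℕ) (G : SimpleGraph (Fin n)), G.Connected →
        ∀ ids : Fin n → ℕ, ValidIds c ids →
          ((TreedepthLE G t →
              ∃ cert : Fin n → List Bool,
                (∀ v, (cert v).length ≤ C * t * (Nat.log 2 n + 1)) ∧
                ∀ v, verify (ids v) (cert v) (neighborsView G ids cert v) = true) ∧
            (¬ TreedepthLE G t →
              ∀ cert : Fin n → List Bool,
                ∃ v, verify (ids v) (cert v) (neighborsView G ids cert v) = false)) := by
  classical
  refine ⟨2 * c + 1, TDCert.tdVerify t, ?_⟩
  intro n G hG ids hids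
  constructor
  · -- completeness
    rintro ⟨T, hT⟩
    obtain ⟨M, hMlen, hMmem, hMedge⟩ := TDCert.lists_of_tree G T t hT ids
    refine ⟨fun v => TDCert.encL (M v), ?_, ?_⟩
    · intro v
      have hLg : 1 ≤ Nat.log 2 n + 1 := by omega
      have hB : ∀ m ∈ M v, (TDCert.encN m).length ≤ 2 * (c * (Nat.log 2 n + 1)) + 1 := by
        intro m hm
        obtain ⟨u, rfl⟩ := hMmem v m hm
        apply TDCert.length_encN_le
        calc ids u ≤ n ^ c := (hids.2 u).2
        _ < (2 ^ (Nat.log 2 n + 1)) ^ c :=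
            Nat.pow_lt_pow_left (Nat.lt_pow_succ_log_self (by norm_num) n) (by omega)
        _ = 2 ^ (c * (Nat.log 2 n + 1)) := by rw [← pow_mul, Nat.mul_comm]
      calc (TDCert.encL (M v)).length
          ≤ (M v).length * (2 * (c * (Nat.log 2 n + 1)) + 1) := TDCert.length_encL_le hB
        _ ≤ t * (2 * (c * (Nat.log 2 n + 1)) + 1) := Nat.mul_le_mul_right _ (hMlen v)
        _ ≤ t * ((2 * c + 1) * (Nat.log 2 n + 1)) :=
            Nat.mul_le_mul_left _ (by nlinarith)
        _ = (2 * c + 1) * t * (Nat.log 2 n + 1) := by ring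
    · intro v
      rw [TDCert.tdVerify_iff]
      refine ⟨M v, rfl, hMlen v, ?_⟩
      rintro p ⟨u, hadj, rfl⟩
      exact ⟨M u, rfl, (hMedge u v hadj.symm).symm⟩
  · -- soundness
    intro hnot cert
    by_contra hcon
    push_neg at hcon
    apply hnot
    have hacc : ∀ v, TDCert.tdVerify t (ids v) (cert v)
        (neighborsView G ids cert v) = true := by
      intro v
      have h := hcon v
      revert h
      cases TDCert.tdVerify t (ids v) (cert v) (neighborsView G ids cert v) <;> simp
    have hM := fun v => (TDCert.tdVerify_iff t (ids v) (cert v)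
      (neighborsView G ids cert v)).mp (hacc v)
    choose M hM1 hM2 hM3 using hM
    refine TDCert.tree_of_lists G hG t (fun v => ids v :: M v) ?_ ?_ ?_ ?_
    · intro a b hab
      simp only [List.cons.injEq] at hab
      exact hids.1 hab.1
    · intro v
      simp
    · intro v
      simp only [List.length_cons]
      exact Nat.succ_le_succ (hM2 v)
    · intro u v hadj
      have hmem : (ids v, cert v) ∈ neighborsView G ids cert u := ⟨v, hadj, rfl⟩
      obtain ⟨M', hM', hcmp⟩ := hM3 u (ids v, cert v) hmem
      have hMM : M' = M v := TDCert.encL_inj (hM'.symm.trans (hM1 v))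
      rw [hMM] at hcmp
      exact hcmp
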